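/- Let X be a measurable space, A a finite nonempty set with |A| elements, κ a Markov kernel from X × A to X, φ : X × A → [−1,1]^d measurable, P₀ a probability measure on X, and H ∈ ℕ with H ≥ 1. A Markov policy π assigns to each x ∈ X a probability mass function π(x,·) on A, measurably in x; under π, the trajectory (X_1, A_1, …, X_H, A_H) has the law determined by X_1 ∼ P₀, A_h | X_h ∼ π(X_h, ·), and X_{h+1} ∼ κ(X_h, A_h), and Σ(π) := E^π[ (1/H) Σ_{h=1}^H φ(X_h, A_h) φ(X_h, A_h)ᵀ ]. Let π^U be the uniform policy π^U(x,a) = 1/|A|, and let π^E be any Markov policy; set c := sup_{x ∈ X, a ∈ A} π^E(x,a) · |A| and assume c < ∞. Then Σ(π^E) ⪯ c^H · Σ(π^U) in the positive semidefinite order; consequently, for every s ∈ {1,…,d}, σ²_min(Σ(π^U), s) ≥ c^{−H} · σ²_min(Σ(π^E), s), and since c ≥ 1 also σ_min(Σ(π^U), s) ≥ c^{−H} · σ_min(Σ(π^E), s) where σ_min denotes the square root of σ²_min. -/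

import Mathlib

open MeasureTheory ProbabilityTheory

/-- The restricted minimum eigenvalue `σ²_min(M, s)` of a positive semidefinite matrix
`M ∈ ℝ^{d×d}` at sparsity level `s`. -/
noncomputable def restrictedMinEigenvalueSq {d : ℕ} (M : Matrix (Fin d) (Fin d) ℝ) (s : ℕ) : ℝ :=
  sInf {v : ℝ | ∃ (I : Finset (Fin d)) (β : Fin d → ℝ),
    I.card ≤ s ∧ (∃ i ∈ I, β i ≠ 0) ∧
    (∑ i ∈ Iᶜ, |β i|) ≤ 3 * ∑ i ∈ I, |β i| ∧
    v = (∑ i, ∑ j, β i * M i j * β j) / (∑ i ∈ I, β i ^ 2)}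

/-- `gramRec κ φ π h x i j` is the `(i,j)` entry of
`E^π[ Σ_{t=1}^{h} φ(X_t, A_t) φ(X_t, A_t)ᵀ | X_1 = x ]`, the expected cumulative Gram
matrix of feature vectors over `h` steps of the MDP with transition kernel `κ` started at
`x`, under the Markov policy `π`, defined by iterated integration of the kernels. -/
noncomputable def gramRec {X : Type*} [MeasurableSpace X] {A : Type*} [MeasurableSpace A]
    [Fintype A] {d : ℕ} (κ : Kernel (X × A) X) (φ : X → A → Fin d → ℝ)
    (π : X → A → ℝ) : ℕ → X → Fin d → Fin d → ℝ
  | 0, _, _, _ => 0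
  | h + 1, x, i, j => ∑ a, π x a *
      (φ x a i * φ x a j + ∫ x', gramRec κ φ π h x' i j ∂(κ (x, a)))

section Aux

variable {X : Type*} [MeasurableSpace X] {A : Type*} [MeasurableSpace A] [Fintype A]
  {d : ℕ} (κ : Kernel (X × A) X) [IsMarkovKernel κ] (φ : X → A → Fin d → ℝ)

lemma gramRec_measurable (π : X → A → ℝ) (hπ : ∀ a, Measurable fun x => π x a)
    (hφmeas : ∀ (a : A) (i : Fin d), Measurable fun x => φ x a i) :
    ∀ (h : ℕ) (i j : Fin d), Measurable fun x => gramRec κ φ π h x i j := by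
  intro h
  induction h with
  | zero => intro i j; simpa [gramRec] using measurable_const
  | succ h ih =>
    intro i j
    simp only [gramRec]
    refine Finset.measurable_sum _ fun a _ => (hπ a).mul ?_
    refine ((hφmeas a i).mul (hφmeas a j)).add ?_
    have h1 : StronglyMeasurable fun p : X × A => ∫ x', gramRec κ φ π h x' i j ∂(κ p) := by
      have h2 : StronglyMeasurable (fun q : (X × A) × X => gramRec κ φ π h q.2 i j) :=
        ((ih i j).comp measurable_snd).stronglyMeasurable
      exact h2.integral_kernel_prod_right'
    exact h1.measurable.comp (measurable_id.prodMk measurable_const)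

lemma gramRec_abs_le (π : X → A → ℝ) (hπ0 : ∀ x a, 0 ≤ π x a) (hπ1 : ∀ x, ∑ a, π x a = 1)
    (hφbd : ∀ x a i, |φ x a i| ≤ 1) :
    ∀ (h : ℕ) (x : X) (i j : Fin d), |gramRec κ φ π h x i j| ≤ h := by
  intro h
  induction h with
  | zero => intro x i j; simp [gramRec]
  | succ h ih =>
    intro x i j
    simp only [gramRec]
    calc |∑ a, π x a * (φ x a i * φ x a j + ∫ x', gramRec κ φ π h x' i j ∂(κ (x, a)))|
        ≤ ∑ a, |π x a * (φ x a i * φ x a j + ∫ x', gramRec κ φ π h x' i j ∂(κ (x, a)))| :=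
          Finset.abs_sum_le_sum_abs _ _
      _ ≤ ∑ a, π x a * (h + 1) := by
          refine Finset.sum_le_sum fun a _ => ?_
          rw [abs_mul, abs_of_nonneg (hπ0 x a)]
          refine mul_le_mul_of_nonneg_left ?_ (hπ0 x a)
          refine (abs_add_le _ _).trans ?_
          have h1 : |φ x a i * φ x a j| ≤ 1 := by
            rw [abs_mul]
            exact mul_le_one₀ (hφbd x a i) (abs_nonneg _) (hφbd x a j)
          have h2 : |∫ x', gramRec κ φ π h x' i j ∂(κ (x, a))| ≤ h := by
            have := norm_integral_le_of_norm_le_const (μ := κ (x, a))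
              (f := fun x' => gramRec κ φ π h x' i j) (C := h)
              (ae_of_all _ fun x' => by simpa using ih x' i j)
            simpa using this
          linarith
      _ = (h + 1 : ℕ) := by
          rw [← Finset.sum_mul, hπ1 x, one_mul]; push_cast; ring

lemma gramRec_integrable (π : X → A → ℝ) (hπ : ∀ a, Measurable fun x => π x a)
    (hπ0 : ∀ x a, 0 ≤ π x a) (hπ1 : ∀ x, ∑ a, π x a = 1)
    (hφmeas : ∀ (a : A) (i : Fin d), Measurable fun x => φ x a i)
    (hφbd : ∀ x a i, |φ x a i| ≤ 1)
    (h : ℕ) (i j : Fin d) (μ : Measure X) [IsProbabilityMeasure μ] :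
    Integrable (fun x => gramRec κ φ π h x i j) μ := by
  refine (integrable_const (h : ℝ)).mono'
    ((gramRec_measurable κ φ π hπ hφmeas h i j).aestronglyMeasurable)
    (ae_of_all _ fun x => ?_)
  simpa using gramRec_abs_le κ φ π hπ0 hπ1 hφbd h x i j

/-- quadratic form expansion -/
lemma gramRec_quadform_succ (π : X → A → ℝ) (hπ : ∀ a, Measurable fun x => π x a)
    (hπ0 : ∀ x a, 0 ≤ π x a) (hπ1 : ∀ x, ∑ a, π x a = 1)
    (hφmeas : ∀ (a : A) (i : Fin d), Measurable fun x => φ x a i)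
    (hφbd : ∀ x a i, |φ x a i| ≤ 1) (β : Fin d → ℝ) (h : ℕ) (x : X) :
    ∑ i, ∑ j, β i * gramRec κ φ π (h + 1) x i j * β j
      = ∑ a, π x a * ((∑ i, β i * φ x a i) ^ 2 +
          ∫ x', ∑ i, ∑ j, β i * gramRec κ φ π h x' i j * β j ∂(κ (x, a))) := by
  have hint : ∀ (a : A) (i j : Fin d),
      Integrable (fun x' => β i * gramRec κ φ π h x' i j * β j) (κ (x, a)) := fun a i j =>
    ((gramRec_integrable κ φ π hπ hπ0 hπ1 hφmeas hφbd h i j (κ (x, a))).const_mul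
      (β i)).mul_const (β j)
  have key : ∀ a : A, ∫ x', ∑ i, ∑ j, β i * gramRec κ φ π h x' i j * β j ∂(κ (x, a))
      = ∑ i, ∑ j, β i * (∫ x', gramRec κ φ π h x' i j ∂(κ (x, a))) * β j := by
    intro a
    rw [integral_finset_sum _ fun i _ => integrable_finset_sum _ fun j _ => hint a i j]
    refine Finset.sum_congr rfl fun i _ => ?_
    rw [integral_finset_sum _ fun j _ => hint a i j]
    refine Finset.sum_congr rfl fun j _ => ?_
    rw [integral_mul_const, integral_const_mul]
  simp only [gramRec, key]
  have swap3 : ∀ (g : Fin d → Fin d → A → ℝ),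
      ∑ i, ∑ j, ∑ a, g i j a = ∑ a, ∑ i, ∑ j, g i j a := by
    intro g
    calc ∑ i, ∑ j, ∑ a, g i j a
        = ∑ i, ∑ a, ∑ j, g i j a := Finset.sum_congr rfl fun i _ => Finset.sum_comm
      _ = ∑ a, ∑ i, ∑ j, g i j a := Finset.sum_comm
  calc ∑ i, ∑ j, β i * (∑ a, π x a *
          (φ x a i * φ x a j + ∫ x', gramRec κ φ π h x' i j ∂(κ (x, a)))) * β j
      = ∑ i, ∑ j, ∑ a, β i * (π x a *
          (φ x a i * φ x a j + ∫ x', gramRec κ φ π h x' i j ∂(κ (x, a)))) * β j := by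
        refine Finset.sum_congr rfl fun i _ => Finset.sum_congr rfl fun j _ => ?_
        rw [Finset.mul_sum, Finset.sum_mul]
    _ = ∑ a, ∑ i, ∑ j, β i * (π x a *
          (φ x a i * φ x a j + ∫ x', gramRec κ φ π h x' i j ∂(κ (x, a)))) * β j :=
        swap3 _
    _ = ∑ a, π x a * ((∑ i, β i * φ x a i) ^ 2 +
          ∑ i, ∑ j, (β i * ∫ x', gramRec κ φ π h x' i j ∂(κ (x, a))) * β j) := by
        refine Finset.sum_congr rfl fun a _ => ?_
        rw [sq, Finset.sum_mul_sum]
        rw [← Finset.sum_add_distrib, Finset.mul_sum]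
        refine Finset.sum_congr rfl fun i _ => ?_
        rw [← Finset.sum_add_distrib, Finset.mul_sum]
        refine Finset.sum_congr rfl fun j _ => ?_
        ring

lemma gramRec_quadform_integrable (π : X → A → ℝ) (hπ : ∀ a, Measurable fun x => π x a)
    (hπ0 : ∀ x a, 0 ≤ π x a) (hπ1 : ∀ x, ∑ a, π x a = 1)
    (hφmeas : ∀ (a : A) (i : Fin d), Measurable fun x => φ x a i)
    (hφbd : ∀ x a i, |φ x a i| ≤ 1) (β : Fin d → ℝ)
    (h : ℕ) (μ : Measure X) [IsProbabilityMeasure μ] :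
    Integrable (fun x => ∑ i, ∑ j, β i * gramRec κ φ π h x i j * β j) μ :=
  integrable_finset_sum _ fun i _ => integrable_finset_sum _ fun j _ =>
    ((gramRec_integrable κ φ π hπ hπ0 hπ1 hφmeas hφbd h i j μ).const_mul (β i)).mul_const (β j)

lemma gramRec_quadform_nonneg (π : X → A → ℝ) (hπ : ∀ a, Measurable fun x => π x a)
    (hπ0 : ∀ x a, 0 ≤ π x a) (hπ1 : ∀ x, ∑ a, π x a = 1)
    (hφmeas : ∀ (a : A) (i : Fin d), Measurable fun x => φ x a i)
    (hφbd : ∀ x a i, |φ x a i| ≤ 1) (β : Fin d → ℝ) :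
    ∀ (h : ℕ) (x : X), 0 ≤ ∑ i, ∑ j, β i * gramRec κ φ π h x i j * β j := by
  intro h
  induction h with
  | zero => intro x; simp [gramRec]
  | succ h ih =>
    intro x
    rw [gramRec_quadform_succ κ φ π hπ hπ0 hπ1 hφmeas hφbd β h x]
    refine Finset.sum_nonneg fun a _ => mul_nonneg (hπ0 x a) (add_nonneg (sq_nonneg _) ?_)
    exact integral_nonneg fun x' => ih x'

lemma gramRec_quadform_le [Nonempty A] (πE πU : X → A → ℝ)
    (hπE_meas : ∀ a, Measurable fun x => πE x a)
    (hπE_nonneg : ∀ x a, 0 ≤ πE x a) (hπE_sum : ∀ x, ∑ a, πE x a = 1)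
    (hπU : ∀ x a, πU x a = 1 / Fintype.card A)
    (hφmeas : ∀ (a : A) (i : Fin d), Measurable fun x => φ x a i)
    (hφbd : ∀ x a i, |φ x a i| ≤ 1)
    (c : ℝ) (hc : ∀ x a, πE x a * Fintype.card A ≤ c) (hc1 : 1 ≤ c) (β : Fin d → ℝ) :
    ∀ (h : ℕ) (x : X), ∑ i, ∑ j, β i * gramRec κ φ πE h x i j * β j
      ≤ c ^ h * ∑ i, ∑ j, β i * gramRec κ φ πU h x i j * β j := by
  have hcard : (0 : ℝ) < Fintype.card A := by positivity
  have hπU_meas : ∀ a, Measurable fun x => πU x a := by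
    intro a; simp only [hπU]; exact measurable_const
  have hπU_nonneg : ∀ x a, 0 ≤ πU x a := by
    intro x a; rw [hπU]; positivity
  have hπU_sum : ∀ x, ∑ a, πU x a = 1 := by
    intro x
    simp only [hπU, Finset.sum_const, Finset.card_univ, nsmul_eq_mul]
    field_simp
  intro h
  induction h with
  | zero => intro x; simp [gramRec]
  | succ h ih =>
    intro x
    rw [gramRec_quadform_succ κ φ πE hπE_meas hπE_nonneg hπE_sum hφmeas hφbd β h x,
      gramRec_quadform_succ κ φ πU hπU_meas hπU_nonneg hπU_sum hφmeas hφbd β h x]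
    have hQU0 : ∀ (a : A), 0 ≤ ∫ x', ∑ i, ∑ j, β i * gramRec κ φ πU h x' i j * β j ∂(κ (x, a)) :=
      fun a => integral_nonneg fun x' =>
        gramRec_quadform_nonneg κ φ πU hπU_meas hπU_nonneg hπU_sum hφmeas hφbd β h x'
    have hch : (1 : ℝ) ≤ c ^ h := one_le_pow₀ hc1
    calc ∑ a, πE x a * ((∑ i, β i * φ x a i) ^ 2 +
            ∫ x', ∑ i, ∑ j, β i * gramRec κ φ πE h x' i j * β j ∂(κ (x, a)))
        ≤ ∑ a, πE x a * ((∑ i, β i * φ x a i) ^ 2 +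
            c ^ h * ∫ x', ∑ i, ∑ j, β i * gramRec κ φ πU h x' i j * β j ∂(κ (x, a))) := by
          refine Finset.sum_le_sum fun a _ => mul_le_mul_of_nonneg_left
            (add_le_add_right ?_ _) (hπE_nonneg x a)
          rw [← integral_const_mul]
          refine integral_mono
            (gramRec_quadform_integrable κ φ πE hπE_meas hπE_nonneg hπE_sum hφmeas hφbd β h _)
            ((gramRec_quadform_integrable κ φ πU hπU_meas hπU_nonneg hπU_sum hφmeas hφbd β h
              _).const_mul _) (fun x' => ih x')
      _ ≤ ∑ a, (c * πU x a) * (c ^ h * ((∑ i, β i * φ x a i) ^ 2 +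
            ∫ x', ∑ i, ∑ j, β i * gramRec κ φ πU h x' i j * β j ∂(κ (x, a)))) := by
          refine Finset.sum_le_sum fun a _ => ?_
          have hπEle : πE x a ≤ c * πU x a := by
            rw [hπU, mul_one_div, le_div_iff₀ hcard]
            exact hc x a
          have hinner : (∑ i, β i * φ x a i) ^ 2 +
              c ^ h * ∫ x', ∑ i, ∑ j, β i * gramRec κ φ πU h x' i j * β j ∂(κ (x, a))
              ≤ c ^ h * ((∑ i, β i * φ x a i) ^ 2 +
              ∫ x', ∑ i, ∑ j, β i * gramRec κ φ πU h x' i j * β j ∂(κ (x, a))) := by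
            rw [mul_add]
            exact add_le_add_left (le_mul_of_one_le_left (sq_nonneg _) hch) _
          refine mul_le_mul hπEle hinner ?_ ?_
          · exact add_nonneg (sq_nonneg _) (mul_nonneg (by positivity) (hQU0 a))
          · exact mul_nonneg (by linarith) (hπU_nonneg x a)
      _ = c ^ (h + 1) * ∑ a, πU x a * ((∑ i, β i * φ x a i) ^ 2 +
            ∫ x', ∑ i, ∑ j, β i * gramRec κ φ πU h x' i j * β j ∂(κ (x, a))) := by
          rw [Finset.mul_sum]
          refine Finset.sum_congr rfl fun a _ => ?_
          ring

lemma quadform_matrix_eq (π : X → A → ℝ) (hπ : ∀ a, Measurable fun x => π x a)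
    (hπ0 : ∀ x a, 0 ≤ π x a) (hπ1 : ∀ x, ∑ a, π x a = 1)
    (hφmeas : ∀ (a : A) (i : Fin d), Measurable fun x => φ x a i)
    (hφbd : ∀ x a i, |φ x a i| ≤ 1) (β : Fin d → ℝ)
    (h : ℕ) (μ : Measure X) [IsProbabilityMeasure μ] (r : ℝ) :
    ∑ i, ∑ j, β i * (r * ∫ x, gramRec κ φ π h x i j ∂μ) * β j
      = r * ∫ x, ∑ i, ∑ j, β i * gramRec κ φ π h x i j * β j ∂μ := by
  have hint : ∀ (i j : Fin d),
      Integrable (fun x => β i * gramRec κ φ π h x i j * β j) μ := fun i j =>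
    ((gramRec_integrable κ φ π hπ hπ0 hπ1 hφmeas hφbd h i j μ).const_mul (β i)).mul_const (β j)
  rw [integral_finset_sum _ fun i _ => integrable_finset_sum _ fun j _ => hint i j,
    Finset.mul_sum]
  refine Finset.sum_congr rfl fun i _ => ?_
  rw [integral_finset_sum _ fun j _ => hint i j, Finset.mul_sum]
  refine Finset.sum_congr rfl fun j _ => ?_
  rw [integral_mul_const, integral_const_mul]
  ring

end Aux

/-- **The uniform policy is exploratory whenever any exploratory policy exists.**
If `π^E` is any Markov policy with `π^E(x,a)·|A| ≤ c` for all `(x,a)`, and `π^U` is the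
uniform policy, then the expected Gram matrices
`Σ(π) = E^π[(1/H) Σ_{h=1}^H φ(X_h,A_h)φ(X_h,A_h)ᵀ]` satisfy `Σ(π^E) ⪯ c^H Σ(π^U)` in the
positive semidefinite order; consequently `σ²_min(Σ(π^U), s) ≥ c^{−H} σ²_min(Σ(π^E), s)`
and (since `c ≥ 1`) `σ_min(Σ(π^U), s) ≥ c^{−H} σ_min(Σ(π^E), s)` for every `s ∈ {1,…,d}`. -/
theorem uniform_policy_exploratory
    {X : Type*} [MeasurableSpace X] {A : Type*} [MeasurableSpace A] [Fintype A] [Nonempty A]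
    {d : ℕ} (hd : 1 ≤ d)
    (κ : Kernel (X × A) X) [IsMarkovKernel κ]
    (φ : X → A → Fin d → ℝ)
    (hφmeas : ∀ (a : A) (i : Fin d), Measurable fun x => φ x a i)
    (hφbd : ∀ x a i, |φ x a i| ≤ 1)
    (P₀ : Measure X) [IsProbabilityMeasure P₀]
    (H : ℕ) (hH : 1 ≤ H)
    (πE : X → A → ℝ) (hπE_meas : ∀ a, Measurable fun x => πE x a)
    (hπE_nonneg : ∀ x a, 0 ≤ πE x a) (hπE_sum : ∀ x, ∑ a, πE x a = 1)
    (πU : X → A → ℝ) (hπU : ∀ x a, πU x a = 1 / Fintype.card A)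
    (c : ℝ) (hc : ∀ x a, πE x a * Fintype.card A ≤ c)
    (SE SU : Matrix (Fin d) (Fin d) ℝ)
    (hSE : ∀ i j, SE i j = (1 / H : ℝ) * ∫ x, gramRec κ φ πE H x i j ∂P₀)
    (hSU : ∀ i j, SU i j = (1 / H : ℝ) * ∫ x, gramRec κ φ πU H x i j ∂P₀) :
    (∀ β : Fin d → ℝ,
      ∑ i, ∑ j, β i * SE i j * β j ≤ c ^ H * ∑ i, ∑ j, β i * SU i j * β j) ∧
    (∀ s, 1 ≤ s → s ≤ d →
      restrictedMinEigenvalueSq SU s ≥ (c ^ H)⁻¹ * restrictedMinEigenvalueSq SE s ∧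
      Real.sqrt (restrictedMinEigenvalueSq SU s) ≥
        (c ^ H)⁻¹ * Real.sqrt (restrictedMinEigenvalueSq SE s)) := by
  have hcard : (0 : ℝ) < Fintype.card A := by positivity
  -- X is nonempty since it carries a probability measure
  have hXne : Nonempty X := by
    by_contra hX
    rw [not_nonempty_iff] at hX
    have h1 := measure_univ (μ := P₀)
    rw [Set.univ_eq_empty_iff.mpr hX] at h1
    simp at h1
  obtain ⟨x₀⟩ := hXne
  -- c ≥ 1
  have hc1 : (1 : ℝ) ≤ c := by
    have hsum : ∑ _a : A, (1 / Fintype.card A : ℝ) = 1 := by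
      rw [Finset.sum_const, Finset.card_univ, nsmul_eq_mul]; field_simp
    obtain ⟨a, -, ha⟩ := Finset.exists_le_of_sum_le (Finset.univ_nonempty (α := A))
      (le_of_eq (by rw [hsum, hπE_sum x₀]) :
        ∑ _a : A, (1 / Fintype.card A : ℝ) ≤ ∑ a, πE x₀ a)
    calc (1 : ℝ) = 1 / Fintype.card A * Fintype.card A := by field_simp
      _ ≤ πE x₀ a * Fintype.card A := by gcongr
      _ ≤ c := hc x₀ a
  have hcH : (0 : ℝ) < c ^ H := by positivity
  -- πU properties
  have hπU_meas : ∀ a, Measurable fun x => πU x a := by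
    intro a; simp only [hπU]; exact measurable_const
  have hπU_nonneg : ∀ x a, 0 ≤ πU x a := by
    intro x a; rw [hπU]; positivity
  have hπU_sum : ∀ x, ∑ a, πU x a = 1 := by
    intro x
    simp only [hπU, Finset.sum_const, Finset.card_univ, nsmul_eq_mul]
    field_simp
  -- quadratic form identities
  have eSE : ∀ β : Fin d → ℝ, ∑ i, ∑ j, β i * SE i j * β j
      = (1 / H : ℝ) * ∫ x, ∑ i, ∑ j, β i * gramRec κ φ πE H x i j * β j ∂P₀ := by
    intro β
    simp only [hSE]
    exact quadform_matrix_eq κ φ πE hπE_meas hπE_nonneg hπE_sum hφmeas hφbd β H P₀ _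
  have eSU : ∀ β : Fin d → ℝ, ∑ i, ∑ j, β i * SU i j * β j
      = (1 / H : ℝ) * ∫ x, ∑ i, ∑ j, β i * gramRec κ φ πU H x i j * β j ∂P₀ := by
    intro β
    simp only [hSU]
    exact quadform_matrix_eq κ φ πU hπU_meas hπU_nonneg hπU_sum hφmeas hφbd β H P₀ _
  -- part 1
  have part1 : ∀ β : Fin d → ℝ,
      ∑ i, ∑ j, β i * SE i j * β j ≤ c ^ H * ∑ i, ∑ j, β i * SU i j * β j := by
    intro β
    rw [eSE β, eSU β]
    have hmono : ∫ x, ∑ i, ∑ j, β i * gramRec κ φ πE H x i j * β j ∂P₀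
        ≤ c ^ H * ∫ x, ∑ i, ∑ j, β i * gramRec κ φ πU H x i j * β j ∂P₀ := by
      rw [← integral_const_mul]
      refine integral_mono
        (gramRec_quadform_integrable κ φ πE hπE_meas hπE_nonneg hπE_sum hφmeas hφbd β H _)
        ((gramRec_quadform_integrable κ φ πU hπU_meas hπU_nonneg hπU_sum hφmeas hφbd β H
          _).const_mul _) ?_
      exact fun x => gramRec_quadform_le κ φ πE πU hπE_meas hπE_nonneg hπE_sum hπU
        hφmeas hφbd c hc hc1 β H x
    calc (1 / H : ℝ) * ∫ x, ∑ i, ∑ j, β i * gramRec κ φ πE H x i j * β j ∂P₀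
        ≤ (1 / H : ℝ) * (c ^ H * ∫ x, ∑ i, ∑ j, β i * gramRec κ φ πU H x i j * β j ∂P₀) :=
          mul_le_mul_of_nonneg_left hmono (by positivity)
      _ = c ^ H * ((1 / H : ℝ) * ∫ x, ∑ i, ∑ j, β i * gramRec κ φ πU H x i j * β j ∂P₀) := by
          ring
  -- nonnegativity of quadratic forms
  have hSEnn : ∀ β : Fin d → ℝ, 0 ≤ ∑ i, ∑ j, β i * SE i j * β j := by
    intro β
    rw [eSE β]
    refine mul_nonneg (by positivity) (integral_nonneg fun x => ?_)
    exact gramRec_quadform_nonneg κ φ πE hπE_meas hπE_nonneg hπE_sum hφmeas hφbd β H x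
  have hSUnn : ∀ β : Fin d → ℝ, 0 ≤ ∑ i, ∑ j, β i * SU i j * β j := by
    intro β
    rw [eSU β]
    refine mul_nonneg (by positivity) (integral_nonneg fun x => ?_)
    exact gramRec_quadform_nonneg κ φ πU hπU_meas hπU_nonneg hπU_sum hφmeas hφbd β H x
  refine ⟨part1, fun s hs1 hs2 => ?_⟩
  set i₀ : Fin d := ⟨0, hd⟩ with hi₀
  set β₀ : Fin d → ℝ := fun j => if j = i₀ then 1 else 0 with hβ₀
  have hmem : ∀ (M : Matrix (Fin d) (Fin d) ℝ),
      (∑ i, ∑ j, β₀ i * M i j * β₀ j) / (∑ i ∈ ({i₀} : Finset (Fin d)), β₀ i ^ 2) ∈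
      {v : ℝ | ∃ (I : Finset (Fin d)) (β : Fin d → ℝ),
        I.card ≤ s ∧ (∃ i ∈ I, β i ≠ 0) ∧
        (∑ i ∈ Iᶜ, |β i|) ≤ 3 * ∑ i ∈ I, |β i| ∧
        v = (∑ i, ∑ j, β i * M i j * β j) / (∑ i ∈ I, β i ^ 2)} := by
    intro M
    refine ⟨{i₀}, β₀, by simpa using hs1, ⟨i₀, by simp, by simp [hβ₀]⟩, ?_, rfl⟩
    have h1 : ∑ i ∈ ({i₀} : Finset (Fin d))ᶜ, |β₀ i| = 0 := by
      refine Finset.sum_eq_zero fun j hj => ?_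
      simp only [Finset.mem_compl, Finset.mem_singleton] at hj
      simp [hβ₀, hj]
    rw [h1]
    simp [hβ₀]
  have hneE := Set.nonempty_of_mem (hmem SE)
  have hneU := Set.nonempty_of_mem (hmem SU)
  have hbdd : ∀ (M : Matrix (Fin d) (Fin d) ℝ), (∀ β : Fin d → ℝ,
      0 ≤ ∑ i, ∑ j, β i * M i j * β j) → ∀ v ∈
      {v : ℝ | ∃ (I : Finset (Fin d)) (β : Fin d → ℝ),
        I.card ≤ s ∧ (∃ i ∈ I, β i ≠ 0) ∧
        (∑ i ∈ Iᶜ, |β i|) ≤ 3 * ∑ i ∈ I, |β i| ∧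
        v = (∑ i, ∑ j, β i * M i j * β j) / (∑ i ∈ I, β i ^ 2)}, 0 ≤ v := by
    rintro M hM v ⟨I, β, hIc, hex, hcone, rfl⟩
    exact div_nonneg (hM β) (Finset.sum_nonneg fun i _ => sq_nonneg _)
  have hσE0 : 0 ≤ restrictedMinEigenvalueSq SE s :=
    le_csInf hneE (hbdd SE hSEnn)
  have hσU0 : 0 ≤ restrictedMinEigenvalueSq SU s :=
    le_csInf hneU (hbdd SU hSUnn)
  have hmain : (c ^ H)⁻¹ * restrictedMinEigenvalueSq SE s ≤ restrictedMinEigenvalueSq SU s := by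
    rw [restrictedMinEigenvalueSq]
    refine le_csInf hneU ?_
    rintro v ⟨I, β, hIc, hex, hcone, rfl⟩
    have hn : 0 < ∑ i ∈ I, β i ^ 2 := by
      obtain ⟨i, hiI, hib⟩ := hex
      exact Finset.sum_pos' (fun j _ => sq_nonneg _) ⟨i, hiI, by positivity⟩
    have h1 : restrictedMinEigenvalueSq SE s ≤
        (∑ i, ∑ j, β i * SE i j * β j) / (∑ i ∈ I, β i ^ 2) :=
      csInf_le ⟨0, hbdd SE hSEnn⟩ ⟨I, β, hIc, hex, hcone, rfl⟩
    calc (c ^ H)⁻¹ * restrictedMinEigenvalueSq SE s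
        ≤ (c ^ H)⁻¹ * ((∑ i, ∑ j, β i * SE i j * β j) / (∑ i ∈ I, β i ^ 2)) := by gcongr
      _ ≤ (∑ i, ∑ j, β i * SU i j * β j) / (∑ i ∈ I, β i ^ 2) := by
          rw [inv_mul_le_iff₀ hcH, ← mul_div_assoc]
          gcongr
          exact part1 β
  refine ⟨hmain, ?_⟩
  have hinv1 : (c ^ H)⁻¹ ≤ 1 := inv_le_one_of_one_le₀ (one_le_pow₀ hc1)
  have hinv0 : (0 : ℝ) ≤ (c ^ H)⁻¹ := by positivity
  have h2 : ((c ^ H)⁻¹) ^ 2 * restrictedMinEigenvalueSq SE s ≤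
      restrictedMinEigenvalueSq SU s := by
    refine le_trans ?_ hmain
    calc ((c ^ H)⁻¹) ^ 2 * restrictedMinEigenvalueSq SE s
        = (c ^ H)⁻¹ * ((c ^ H)⁻¹ * restrictedMinEigenvalueSq SE s) := by ring
      _ ≤ 1 * ((c ^ H)⁻¹ * restrictedMinEigenvalueSq SE s) :=
          mul_le_mul_of_nonneg_right hinv1 (mul_nonneg hinv0 hσE0)
      _ = (c ^ H)⁻¹ * restrictedMinEigenvalueSq SE s := one_mul _
  calc (c ^ H)⁻¹ * Real.sqrt (restrictedMinEigenvalueSq SE s)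
      = Real.sqrt (((c ^ H)⁻¹) ^ 2 * restrictedMinEigenvalueSq SE s) := by
        rw [Real.sqrt_mul (sq_nonneg _), Real.sqrt_sq hinv0]
    _ ≤ Real.sqrt (restrictedMinEigenvalueSq SU s) := Real.sqrt_le_sqrt h2
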